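/- Let l ∈ {K, K4, KD4, S4}, let φ be a modal formula, and let S be a view (with respect to φ) that is consistent for l and l-complete, with C(S) ≠ ∅. Then: if l = K, the formula th(p(S)) ∧ ⋀_{c∈C(S)} ◇th(c) ∧ □⋁_{c∈C(S)} th(c) is satisfiable for K; and if l ∈ {K4, KD4, S4}, the formula th(p(S)) ∧ ⋀_{c∈C(S)} ◇th(c) is satisfiable for l. -/
import Mathlib


/-- Modal formulas in negation normal form, as in the paper:
φ ::= ⊥ | ⊤ | p | ¬p | φ∧φ | φ∨φ | □φ | ◇φ. -/
inductive Form : Type where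
  | bot : Form
  | top : Form
  | pos : ℕ → Form
  | npos : ℕ → Form
  | and : Form → Form → Form
  | or : Form → Form → Form
  | box : Form → Form
  | dia : Form → Form
deriving DecidableEq

namespace Form

/-- Negation, defined as usual (by De Morgan dualities). -/
def neg : Form → Form
  | bot => top
  | top => bot
  | pos p => npos p
  | npos p => pos p
  | and φ ψ => or φ.neg ψ.neg
  | or φ ψ => and φ.neg ψ.neg
  | box φ => dia φ.neg
  | dia φ => box φ.neg

/-- Implication φ → ψ, defined as usual. -/
def imp (φ ψ : Form) : Form := or φ.neg ψ

/-- Bi-implication φ ↔ ψ, defined as usual. -/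
def biimp (φ ψ : Form) : Form := and (imp φ ψ) (imp ψ φ)

/-- P(φ): the set of propositional variables occurring in φ. -/
def vars : Form → Finset ℕ
  | bot => ∅
  | top => ∅
  | pos p => {p}
  | npos p => {p}
  | and φ ψ => φ.vars ∪ ψ.vars
  | or φ ψ => φ.vars ∪ ψ.vars
  | box φ => φ.vars
  | dia φ => φ.vars

/-- Modal depth. -/
def md : Form → ℕ
  | bot => 0
  | top => 0
  | pos _ => 0
  | npos _ => 0
  | and φ ψ => max φ.md ψ.md
  | or φ ψ => max φ.md ψ.md
  | box φ => φ.md + 1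
  | dia φ => φ.md + 1

/-- sub(φ): the set of subformulas of φ. -/
def subf : Form → Finset Form
  | bot => {bot}
  | top => {top}
  | pos p => {pos p}
  | npos p => {npos p}
  | and φ ψ => insert (and φ ψ) (φ.subf ∪ ψ.subf)
  | or φ ψ => insert (or φ ψ) (φ.subf ∪ ψ.subf)
  | box φ => insert (box φ) φ.subf
  | dia φ => insert (dia φ) φ.subf

/-- s̄ub(φ) = sub(φ) ∪ {¬ψ : ψ ∈ sub(φ)}. -/
def subBar (φ : Form) : Finset Form := φ.subf ∪ φ.subf.image neg

/-- □^k φ : k nested boxes. -/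
def boxIter : ℕ → Form → Form
  | 0, φ => φ
  | n + 1, φ => box (boxIter n φ)

def isDia : Form → Bool
  | dia _ => true
  | _ => false

def isBox : Form → Bool
  | box _ => true
  | _ => false

end Form

/-- Big conjunction over a finite set of formulas (⋀∅ = ⊤). -/
noncomputable def bigAnd (s : Finset Form) : Form := s.toList.foldr Form.and Form.top

/-- Big disjunction over a finite set of formulas (⋁∅ = ⊥). -/
noncomputable def bigOr (s : Finset Form) : Form := s.toList.foldr Form.or Form.bot

/-- th(a) = ⋀ a. -/
noncomputable def th (a : Finset Form) : Form := bigAnd a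

/-- A finite Kripke model: a nonempty finite set of states, an accessibility
relation and a valuation. -/
structure Model : Type 1 where
  W : Type
  nonempty : Nonempty W
  finite : Finite W
  R : W → W → Prop
  V : W → Set ℕ

/-- Satisfaction M,w ⊨ φ. -/
def Model.sat (M : Model) : M.W → Form → Prop
  | _, .bot => False
  | _, .top => True
  | w, .pos p => p ∈ M.V w
  | w, .npos p => p ∉ M.V w
  | w, .and φ ψ => M.sat w φ ∧ M.sat w ψ
  | w, .or φ ψ => M.sat w φ ∨ M.sat w ψ
  | w, .box φ => ∀ v, M.R w v → M.sat v φ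
  | w, .dia φ => ∃ v, M.R w v ∧ M.sat v φ

/-- The six base logics K, D, T, K4, KD4, S4. -/
inductive BaseLogic : Type where
  | K | D | T | K4 | KD4 | S4
deriving DecidableEq

/-- A logic: a base logic, possibly extended by axiom 5. -/
structure Logic : Type where
  base : BaseLogic
  has5 : Bool
deriving DecidableEq

def Logic.K : Logic := ⟨.K, false⟩
def Logic.D : Logic := ⟨.D, false⟩
def Logic.T : Logic := ⟨.T, false⟩
def Logic.K4 : Logic := ⟨.K4, false⟩
def Logic.KD4 : Logic := ⟨.KD4, false⟩
def Logic.S4 : Logic := ⟨.S4, false⟩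

/-- l + 5. -/
def BaseLogic.plus5 (b : BaseLogic) : Logic := ⟨b, true⟩

/-- M is a model for the logic l (frame conditions). -/
def Model.IsFor (M : Model) (l : Logic) : Prop :=
  (match l.base with
    | .K => True
    | .D => ∀ w, ∃ v, M.R w v
    | .T => ∀ w, M.R w w
    | .K4 => ∀ a b c, M.R a b → M.R b c → M.R a c
    | .KD4 => (∀ w, ∃ v, M.R w v) ∧ (∀ a b c, M.R a b → M.R b c → M.R a c)
    | .S4 => (∀ w, M.R w w) ∧ (∀ a b c, M.R a b → M.R b c → M.R a c))
  ∧ (l.has5 = true → ∀ a b c, M.R a b → M.R a c → M.R b c)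

/-- φ is satisfiable for l: satisfied at some state of some finite model for l. -/
def Satisfiable (l : Logic) (φ : Form) : Prop :=
  ∃ M : Model, M.IsFor l ∧ ∃ w : M.W, M.sat w φ

/-- φ is valid for l: satisfied at every state of every finite model for l. -/
def Valid (l : Logic) (φ : Form) : Prop :=
  ∀ M : Model, M.IsFor l → ∀ w : M.W, M.sat w φ

/-- φ is complete for l: for every ψ ∈ L(P(φ)), φ→ψ or φ→¬ψ is valid for l. -/
def Complete (l : Logic) (φ : Form) : Prop :=
  ∀ ψ : Form, ψ.vars ⊆ φ.vars → (Valid l (φ.imp ψ) ∨ Valid l (φ.imp ψ.neg))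

/-- Z is a bisimulation modulo P from M to M'. -/
def IsBisim (P : Set ℕ) (M M' : Model) (Z : M.W → M'.W → Prop) : Prop :=
  (∃ s s', Z s s') ∧
  ∀ s s', Z s s' →
    (M.V s ∩ P = M'.V s' ∩ P) ∧
    (∀ t, M.R s t → ∃ t', M'.R s' t' ∧ Z t t') ∧
    (∀ t', M'.R s' t' → ∃ t, M.R s t ∧ Z t t')

/-- (M,a) ∼_P (M',a'). -/
def Bisimilar (P : Set ℕ) (M : Model) (a : M.W) (M' : Model) (a' : M'.W) : Prop :=
  ∃ Z, IsBisim P M M' Z ∧ Z a a'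

/-- (M,a) ≡_P (M',a'): the two pointed models satisfy the same formulas of L(P). -/
def EquivP (P : Set ℕ) (M : Model) (a : M.W) (M' : Model) (a' : M'.W) : Prop :=
  ∀ φ : Form, ↑φ.vars ⊆ P → (M.sat a φ ↔ M'.sat a' φ)

/-- (M,s) is flat (for base logic l, with axiom 5): the carrier is {s}∪W and
R = R1 ∪ R2 with R1 ⊆ {s}×W, R2 an equivalence relation on W, and s ∈ W if
l ∈ {T,S4}. -/
def Flat (l : BaseLogic) (M : Model) (s : M.W) : Prop :=
  ∃ W : Set M.W, (∀ w, w = s ∨ w ∈ W) ∧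
    ∃ R1 R2 : M.W → M.W → Prop,
      (∀ x y, M.R x y ↔ (R1 x y ∨ R2 x y)) ∧
      (∀ x y, R1 x y → x = s ∧ y ∈ W) ∧
      (∀ x y, R2 x y → x ∈ W ∧ y ∈ W) ∧
      (∀ x ∈ W, R2 x x) ∧
      (∀ x y, R2 x y → R2 y x) ∧
      (∀ x y z, R2 x y → R2 y z → R2 x z) ∧
      ((l = .T ∨ l = .S4) → s ∈ W)

/-- A maximal state for l with respect to φ: a maximally l-consistent subset
of s̄ub(φ). -/
def MaxState (l : Logic) (φ : Form) (a : Finset Form) : Prop :=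
  a ⊆ φ.subBar ∧ Satisfiable l (th a) ∧ ∀ ψ ∈ φ.subf, ψ ∈ a ∨ ψ.neg ∈ a

/-- D(x) = {◇ψ : ◇ψ ∈ x}. -/
def DSet (x : Finset Form) : Finset Form := x.filter (fun ψ => ψ.isDia = true)

/-- B(x) = {□ψ : □ψ ∈ x}. -/
def BSet (x : Finset Form) : Finset Form := x.filter (fun ψ => ψ.isBox = true)

/-- A view: a parent-state and a finite set of children-states. -/
structure View : Type where
  parent : Finset Form
  children : Finset (Finset Form)

/-- The view is with respect to φ: all its states are subsets of s̄ub(φ). -/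
def View.WF (φ : Form) (S : View) : Prop :=
  S.parent ⊆ φ.subBar ∧ ∀ c ∈ S.children, c ⊆ φ.subBar

/-- A set of formulas is l-closed. -/
def LClosed (l : Logic) (P : Finset ℕ) (s : Finset Form) : Prop :=
  (∀ φ1 φ2 : Form, Form.and φ1 φ2 ∈ s → φ1 ∈ s ∧ φ2 ∈ s) ∧
  (∀ φ1 φ2 : Form, Form.or φ1 φ2 ∈ s → φ1 ∈ s ∨ φ2 ∈ s) ∧
  ((l.base = .T ∨ l.base = .S4) → ∀ ψ : Form, Form.box ψ ∈ s → ψ ∈ s) ∧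
  (∀ p ∈ P, Form.pos p ∈ s ∨ Form.npos p ∈ s)

/-- The view S is l-complete. -/
def ViewLComplete (l : Logic) (P : Finset ℕ) (S : View) : Prop :=
  LClosed l P S.parent ∧
  (∀ c ∈ S.children, LClosed l P c) ∧
  (∀ ψ : Form, Form.dia ψ ∈ S.parent → ∃ c ∈ S.children, ψ ∈ c) ∧
  (∀ ψ : Form, Form.box ψ ∈ S.parent → ∀ c ∈ S.children, ψ ∈ c) ∧
  ((l.base = .K4 ∨ l.base = .KD4 ∨ l.base = .S4) →
    ∀ ψ : Form, Form.box ψ ∈ S.parent → ∀ c ∈ S.children, Form.box ψ ∈ c) ∧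
  (l.base = .KD4 → S.children.Nonempty)

/-- The view S is consistent for l: every one of its states is consistent. -/
def ViewConsistent (l : Logic) (S : View) : Prop :=
  Satisfiable l (th S.parent) ∧ ∀ c ∈ S.children, Satisfiable l (th c)

/-- d = max{md(th(c')) : c' ∈ C(S)}. -/
noncomputable def childDepth (S : View) : ℕ := S.children.sup (fun c => (th c).md)

/-- A K-maximal child-state: a maximally K-consistent subset of s̄ub_d(φ). -/
def KMaxChild (φ : Form) (d : ℕ) (c : Finset Form) : Prop :=
  c ⊆ φ.subBar.filter (fun ψ => ψ.md ≤ d) ∧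
  Satisfiable Logic.K (th c) ∧
  ∀ ψ ∈ φ.subf, ψ.md ≤ d → (ψ ∈ c ∨ ψ.neg ∈ c)

/-- S' completes S (for logic l, with respect to φ). -/
def ViewCompletes (l : Logic) (φ : Form) (S' S : View) : Prop :=
  ViewLComplete l φ.vars S' ∧
  S.parent ⊆ S'.parent ∧
  (∀ a ∈ S.children, ∃ a' ∈ S'.children, a ⊆ a') ∧
  (l.base = .K → ∀ a' ∈ S'.children, KMaxChild φ (childDepth S') a') ∧
  (l.base ≠ .K → ∀ a' ∈ S'.children, MaxState l φ a')

/-- The depth-0 normal form ⋀_{p∈S} p ∧ ⋀_{p∈P∖S} ¬p. -/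
noncomputable def nf0 (P S : Finset ℕ) : Form :=
  Form.and (bigAnd (S.image Form.pos)) (bigAnd ((P \ S).image Form.npos))

/-- Fine's normal forms F_P^d. -/
noncomputable def NF (P : Finset ℕ) : ℕ → Set Form
  | 0 => { χ | ∃ S ⊆ P, χ = nf0 P S }
  | d + 1 => { χ | ∃ S : Finset Form, ↑S ⊆ NF P d ∧ ∃ S0 ⊆ P,
      χ = Form.and (nf0 P S0)
            (Form.and (bigAnd (S.image Form.dia)) (Form.box (bigOr S))) }

/-- φ is complete up to its depth for l. -/
def CompleteUpToDepth (l : Logic) (φ : Form) : Prop :=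
  ∀ ψ : Form, ψ.vars ⊆ φ.vars → ψ.md ≤ φ.md →
    (Valid l (φ.imp ψ) ∨ Valid l (φ.imp ψ.neg))
section Aux

lemma sat_foldr_and (M : Model) (x : M.W) (L : List Form) :
    M.sat x (L.foldr Form.and Form.top) ↔ ∀ ψ ∈ L, M.sat x ψ := by
  induction L with
  | nil => simp; trivial
  | cons a L ih =>
    show M.sat x a ∧ _ ↔ _
    rw [ih, List.forall_mem_cons]

lemma sat_bigAnd (M : Model) (x : M.W) (s : Finset Form) :
    M.sat x (bigAnd s) ↔ ∀ ψ ∈ s, M.sat x ψ := by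
  rw [bigAnd, sat_foldr_and]
  simp [Finset.mem_toList]

lemma sat_th (M : Model) (x : M.W) (s : Finset Form) :
    M.sat x (th s) ↔ ∀ ψ ∈ s, M.sat x ψ := sat_bigAnd M x s

lemma sat_foldr_or (M : Model) (x : M.W) (L : List Form) :
    M.sat x (L.foldr Form.or Form.bot) ↔ ∃ ψ ∈ L, M.sat x ψ := by
  induction L with
  | nil => simp; intro h; exact h
  | cons a L ih =>
    show M.sat x a ∨ _ ↔ _
    rw [ih]
    simp [List.mem_cons, or_and_right, exists_or, exists_eq_left]

lemma sat_bigOr (M : Model) (x : M.W) (s : Finset Form) :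
    M.sat x (bigOr s) ↔ ∃ ψ ∈ s, M.sat x ψ := by
  rw [bigOr, sat_foldr_or]
  simp [Finset.mem_toList]

end Aux
section Combo

variable {ι : Type} (M : ι → Model) (w : ∀ i, (M i).W)

/-- Relation on the disjoint-union model: a fresh root plus the children models. -/
def comboR (rt tr : Prop) :
    Option ((i : ι) × (M i).W) → Option ((i : ι) × (M i).W) → Prop
  | none, none => rt
  | none, some y => y.2 = w y.1 ∨ (tr ∧ (M y.1).R (w y.1) y.2)
  | some _, none => False
  | some x, some y => ∃ (i : ι) (a b : (M i).W),
      (M i).R a b ∧ x = ⟨i, a⟩ ∧ y = ⟨i, b⟩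

/-- Valuation on the disjoint-union model. -/
def comboV (Vr : Set ℕ) : Option ((i : ι) × (M i).W) → Set ℕ
  | none => Vr
  | some x => (M x.1).V x.2

/-- The disjoint-union model with a fresh root. -/
def combo [Finite ι] (Vr : Set ℕ) (rt tr : Prop) : Model where
  W := Option ((i : ι) × (M i).W)
  nonempty := ⟨none⟩
  finite := by
    haveI : ∀ i, Finite ((M i).W) := fun i => (M i).finite
    haveI : Finite ((i : ι) × (M i).W) := Finite.instSigma
    exact Finite.of_equiv _ (Equiv.optionEquivSumPUnit.{0,0} _).symm
  R := comboR M w rt tr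
  V := comboV M Vr

variable [Finite ι] {Vr : Set ℕ} {rt tr : Prop}

lemma combo_sat (ψ : Form) : ∀ (i : ι) (v : (M i).W),
    (combo M w Vr rt tr).sat (some ⟨i, v⟩) ψ ↔ (M i).sat v ψ := by
  induction ψ with
  | bot => intro i v; exact Iff.rfl
  | top => intro i v; exact Iff.rfl
  | pos p => intro i v; exact Iff.rfl
  | npos p => intro i v; exact Iff.rfl
  | and a b iha ihb => intro i v; exact and_congr (iha i v) (ihb i v)
  | or a b iha ihb => intro i v; exact or_congr (iha i v) (ihb i v)
  | box ψ ih =>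
    intro i v
    constructor
    · intro h u huv
      exact (ih i u).mp (h (some ⟨i, u⟩) ⟨i, v, u, huv, rfl, rfl⟩)
    · intro h y hy
      match y with
      | none => exact hy.elim
      | some y =>
        obtain ⟨j, a, b, hab, h1, h2⟩ := hy
        rw [Sigma.mk.inj_iff] at h1
        obtain ⟨rfl, hv⟩ := h1
        rw [heq_iff_eq] at hv; subst hv; subst h2
        exact (ih _ b).mpr (h b hab)
  | dia ψ ih =>
    intro i v
    constructor
    · rintro ⟨y, hy, hsat⟩
      match y with
      | none => exact hy.elim
      | some y =>
        obtain ⟨j, a, b, hab, h1, h2⟩ := hy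
        rw [Sigma.mk.inj_iff] at h1
        obtain ⟨rfl, hv⟩ := h1
        rw [heq_iff_eq] at hv; subst hv; subst h2
        exact ⟨b, hab, (ih _ b).mp hsat⟩
    · rintro ⟨u, huv, hsat⟩
      exact ⟨some ⟨i, u⟩, ⟨i, v, u, huv, rfl, rfl⟩, (ih i u).mpr hsat⟩

lemma combo_trans (htr : tr)
    (hM : ∀ i, ∀ a b c : (M i).W, (M i).R a b → (M i).R b c → (M i).R a c) :
    ∀ x y z, (combo M w Vr rt tr).R x y → (combo M w Vr rt tr).R y z →
      (combo M w Vr rt tr).R x z := by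
  rintro (_ | x) (_ | y) (_ | z) hxy hyz
  · exact hyz
  · exact hyz
  · exact hyz.elim
  · obtain ⟨j, a, b, hab, h1, h2⟩ := hyz
    subst h1; subst h2
    rcases hxy with h | ⟨_, h⟩
    · have h' : a = w j := h
      subst h'; exact Or.inr ⟨htr, hab⟩
    · have h' : (M j).R (w j) a := h
      exact Or.inr ⟨htr, hM j _ _ _ h' hab⟩
  · exact hxy.elim
  · exact hxy.elim
  · exact hyz.elim
  · obtain ⟨j, a, b, hab, h1, h2⟩ := hxy
    obtain ⟨j', a', b', hab', h1', h2'⟩ := hyz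
    subst h1; subst h2; subst h2'
    rw [Sigma.mk.inj_iff] at h1'
    obtain ⟨rfl, hv⟩ := h1'
    rw [heq_iff_eq] at hv; subst hv
    exact ⟨j, a, b', hM j _ _ _ hab hab', rfl, rfl⟩

end Combo

/-- for a consistent l-complete view S with C(S) ≠ ∅,
the indicated formulas are satisfiable for l. -/
theorem stmt12 (l : Logic)
    (hl : l = Logic.K ∨ l = Logic.K4 ∨ l = Logic.KD4 ∨ l = Logic.S4)
    (φ : Form) (S : View) (hWF : S.WF φ)
    (hcons : ViewConsistent l S) (hcomp : ViewLComplete l φ.vars S)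
    (hne : S.children.Nonempty) :
    (l = Logic.K →
      Satisfiable l
        (Form.and (th S.parent)
          (Form.and (bigAnd (S.children.image (fun c => Form.dia (th c))))
            (Form.box (bigOr (S.children.image th)))))) ∧
    ((l = Logic.K4 ∨ l = Logic.KD4 ∨ l = Logic.S4) →
      Satisfiable l
        (Form.and (th S.parent)
          (bigAnd (S.children.image (fun c => Form.dia (th c)))))) := by
  classical
  obtain ⟨Mp, _, wp, hwp⟩ := hcons.1
  have hwp' : ∀ ψ ∈ S.parent, Mp.sat wp ψ := (sat_th Mp wp S.parent).mp hwp
  haveI : Finite {c : Finset Form // c ∈ S.children} :=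
    @Finite.of_fintype _ (Fintype.subtype S.children (fun _ => Iff.rfl))
  have hch : ∀ i : {c : Finset Form // c ∈ S.children},
      ∃ Mc : Model, Mc.IsFor l ∧ ∃ wc : Mc.W, Mc.sat wc (th i.1) :=
    fun i => hcons.2 i.1 i.2
  choose M hM w hw using hch
  set N := combo M w {p | Form.pos p ∈ S.parent} (l = Logic.S4) (l ≠ Logic.K) with hNdef
  -- every member of the parent holds at the root
  have hroot : ∀ ψ, ψ ∈ S.parent → N.sat none ψ := by
    intro ψ
    induction ψ with
    | bot => intro h; exact hwp' _ h
    | top => intro _; trivial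
    | pos p => intro h; exact h
    | npos p => intro h hmem; exact (hwp' _ h) (hwp' _ hmem)
    | and a b iha ihb =>
      intro h
      obtain ⟨h1, h2⟩ := hcomp.1.1 a b h
      exact ⟨iha h1, ihb h2⟩
    | or a b iha ihb =>
      intro h
      rcases hcomp.1.2.1 a b h with h' | h'
      · exact Or.inl (iha h')
      · exact Or.inr (ihb h')
    | box ψ ih =>
      intro h y hy
      rcases y with _ | ⟨i, v⟩
      · have hS4 : l = Logic.S4 := hy
        have hb : l.base = .T ∨ l.base = .S4 := by subst hS4; exact Or.inr rfl
        exact ih (hcomp.1.2.2.1 hb ψ h)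
      · have hy' : v = w i ∨ ((l ≠ Logic.K) ∧ (M i).R (w i) v) := hy
        rcases hy' with hv | ⟨hK, hRv⟩
        · subst hv
          have hmem : ψ ∈ i.1 := hcomp.2.2.2.1 ψ h i.1 i.2
          exact (combo_sat M w ψ i (w i)).mpr ((sat_th _ _ _).mp (hw i) ψ hmem)
        · have hb : l.base = .K4 ∨ l.base = .KD4 ∨ l.base = .S4 := by
            rcases hl with rfl | rfl | rfl | rfl
            · exact absurd rfl hK
            · exact Or.inl rfl
            · exact Or.inr (Or.inl rfl)
            · exact Or.inr (Or.inr rfl)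
          have hmem : Form.box ψ ∈ i.1 := hcomp.2.2.2.2.1 hb ψ h i.1 i.2
          have hb' : (M i).sat (w i) (Form.box ψ) := (sat_th _ _ _).mp (hw i) _ hmem
          exact (combo_sat M w ψ i v).mpr (hb' v hRv)
    | dia ψ ih =>
      intro h
      obtain ⟨c, hc, hψ⟩ := hcomp.2.2.1 ψ h
      exact ⟨some ⟨⟨c, hc⟩, w ⟨c, hc⟩⟩, Or.inl rfl,
        (combo_sat M w ψ _ _).mpr ((sat_th _ _ _).mp (hw ⟨c, hc⟩) ψ hψ)⟩
  -- diamonds of the children hold at the root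
  have hdia : ∀ c ∈ S.children, N.sat none (Form.dia (th c)) := by
    intro c hc
    exact ⟨some ⟨⟨c, hc⟩, w ⟨c, hc⟩⟩, Or.inl rfl, (combo_sat M w _ _ _).mpr (hw ⟨c, hc⟩)⟩
  have hdias : N.sat none (bigAnd (S.children.image (fun c => Form.dia (th c)))) := by
    refine (sat_bigAnd _ _ _).mpr ?_
    intro χ hχ
    rw [Finset.mem_image] at hχ
    obtain ⟨c, hc, rfl⟩ := hχ
    exact hdia c hc
  -- frame conditions
  have hIsFor : N.IsFor l := by
    constructor
    · rcases hl with rfl | rfl | rfl | rfl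
      · trivial
      · exact combo_trans M w (by decide) (fun i => (hM i).1)
      · refine ⟨?_, combo_trans M w (by decide) (fun i => (hM i).1.2)⟩
        rintro (_ | ⟨i, v⟩)
        · obtain ⟨c, hc⟩ := hne
          exact ⟨some ⟨⟨c, hc⟩, w ⟨c, hc⟩⟩, Or.inl rfl⟩
        · obtain ⟨u, hu⟩ := (hM i).1.1 v
          exact ⟨some ⟨i, u⟩, ⟨i, v, u, hu, rfl, rfl⟩⟩
      · refine ⟨?_, combo_trans M w (by decide) (fun i => (hM i).1.2)⟩
        rintro (_ | ⟨i, v⟩)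
        · exact rfl
        · exact ⟨i, v, v, (hM i).1.1 v, rfl, rfl⟩
    · intro h5
      rcases hl with rfl | rfl | rfl | rfl <;> exact absurd h5 (by decide)
  constructor
  · rintro rfl
    refine ⟨N, hIsFor, none, (sat_th _ _ _).mpr hroot, hdias, ?_⟩
    intro y hy
    rcases y with _ | ⟨i, v⟩
    · have : Logic.K = Logic.S4 := hy
      exact absurd this (by decide)
    · have hy' : v = w i ∨ ((Logic.K ≠ Logic.K) ∧ (M i).R (w i) v) := hy
      rcases hy' with hv | ⟨hK, _⟩
      · subst hv
        exact (sat_bigOr _ _ _).mpr ⟨th i.1, Finset.mem_image_of_mem th i.2,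
          (combo_sat M w _ _ _).mpr (hw i)⟩
      · exact absurd rfl hK
  · intro _
    exact ⟨N, hIsFor, none, (sat_th _ _ _).mpr hroot, hdias⟩
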